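/- Let q = 2^s. The greatest common divisor of x^{q^2+q+1} - 1 and (x+1)^{q^2+q+1} - 1 in 𝔽_2[x] equals (x^{q+1} + x + 1)(x^{q+1} + x^q + 1) if s is odd, and (x^{q+1} + x + 1)(x^{q+1} + x^q + 1)/(x^2 + x + 1) if s is even. In particular the number of α in the algebraic closure of 𝔽_2 with α^{q^2+q+1} = (α+1)^{q^2+q+1} = 1 equals 2q + 1 - (-1)^s. -/

import Mathlib

open Polynomial
namespace Stmt17Aux



noncomputable section

abbrev K : Type := AlgebraicClosure (ZMod 2)

lemma h2 : (2 : K) = 0 := by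
  have : ((2:ℕ) : K) = 0 := CharP.cast_eq_zero K 2
  simpa using this

variable {s q : ℕ}

lemma frob (hq : q = 2 ^ s) (x y : K) : (x + y) ^ q = x ^ q + y ^ q := by
  subst hq; exact add_pow_char_pow x y 2 s

lemma powN (α : K) : α ^ (q^2+q+1) = ((α^q)^q) * α^q * α := by
  rw [show q^2+q+1 = q*q + q + 1 by ring, pow_add, pow_add, pow_mul, pow_one]

lemma LA (hq : q = 2^s) {α : K} (hA : α^(q+1) + α + 1 = 0) : α^(q^2+q+1) = 1 := by
  have h1 : α^(q+1) = α + 1 := by linear_combination hA - (α+1) * h2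
  have h3 : ((α^q)^q) * α^q = (α^(q+1))^q := by
    rw [← pow_mul, ← pow_mul, ← pow_add]
    congr 1
    ring
  have h4 : α^q * α = α + 1 := by rw [← pow_succ]; exact h1
  rw [powN, h3, h1, frob hq, one_pow]
  linear_combination h4 + α * h2

lemma LB (hq : q = 2^s) {α : K} (hB : α^(q+1) + α^q + 1 = 0) : α^(q^2+q+1) = 1 := by
  have hp : α^(q+1) = α^q * α := pow_succ α q
  have hm : α^q * (α + 1) = 1 := by linear_combination hB - hp - h2
  have h5 : (α^q)^q * (α+1)^q = 1 := by rw [← mul_pow, hm, one_pow]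
  rw [frob hq α 1, one_pow] at h5
  rw [powN]
  linear_combination ((α^q)^q) * hm + h5 - ((α^q)^q*α^q) * h2

lemma LC (hq : q = 2^s) {α : K} (hN : α^(q^2+q+1) = 1) :
    ((α+1)^(q^2+q+1) = 1 ↔ (α^(q+1)+α+1) * (α^(q+1)+α^q+1) = 0) := by
  have hα : α ≠ 0 := by
    rintro rfl
    rw [zero_pow (by positivity)] at hN
    exact zero_ne_one hN
  have habc : ((α^q)^q) * α^q * α = 1 := by rw [← powN]; exact hN
  have hU : (α+1)^(q^2+q+1) = ((α^q)^q+1)*(α^q+1)*(α+1) := by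
    rw [powN (α+1), frob hq α 1, one_pow, frob hq (α^q) 1, one_pow]
  have hq1 : α^(q+1) = α^q * α := pow_succ α q
  have key : ((α^q)^q+1)*(α^q+1)*(α+1)*(α^q*α) =
      α^q*α + (α^q*α+α+1)*(α^q*α+α^q+1) := by
    linear_combination (1+α+α^q+α*α^q) * habc - (α*α^q) * h2
  rw [hU, hq1]
  constructor
  · intro hE
    have hk2 := key
    rw [hE, one_mul] at hk2
    linear_combination -hk2
  · intro hP
    have hbα : α^q * α ≠ 0 := mul_ne_zero (pow_ne_zero _ hα) hα
    have : ((α^q)^q+1)*(α^q+1)*(α+1)*(α^q*α) = 1*(α^q*α) := by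
      rw [key, hP, add_zero, one_mul]
    exact mul_right_cancel₀ hbα this

lemma LD {α : K} (hf : α^(q+1)+α+1 = 0) (hg : α^(q+1)+α^q+1 = 0) : α^2+α+1 = 0 := by
  have hp : α^(q+1) = α^q * α := pow_succ α q
  linear_combination (1+α)*hf - α*hg - hp

lemma LE (hk : ∃ k, q = 3*k+1) {α : K} (he : α^2+α+1 = 0) :
    α^(q+1)+α+1 = 0 ∧ α^(q+1)+α^q+1 = 0 := by
  obtain ⟨k, rfl⟩ := hk
  have h3 : α^3 = 1 := by linear_combination (α - 1) * he
  have hαq : α^(3*k+1) = α := by rw [pow_succ, pow_mul, h3, one_pow, one_mul]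
  have hq1 : α^(3*k+1+1) = α * α := by rw [pow_succ, hαq]
  exact ⟨by linear_combination hq1 + he, by linear_combination hq1 + hαq + he⟩

lemma LF (hk : ∃ k, q = 3*k+2) {α : K} (he : α^2+α+1 = 0)
    (hf : α^(q+1)+α+1 = 0) : False := by
  obtain ⟨k, rfl⟩ := hk
  have h3 : α^3 = 1 := by linear_combination (α - 1) * he
  have h1 : α^(3*k+2+1) = 1 := by
    rw [show 3*k+2+1 = 3*(k+1) by ring, pow_mul, h3, one_pow]
  have hα0 : α = 0 := by linear_combination hf - h1 - h2
  rw [hα0] at he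
  norm_num at he

lemma four_pow_mod3 : ∀ m : ℕ, ∃ k, 4^m = 3*k+1 := by
  intro m
  induction m with
  | zero => exact ⟨0, rfl⟩
  | succ n ih =>
    obtain ⟨k, hk⟩ := ih
    exact ⟨4*k+1, by rw [pow_succ, hk]; ring⟩

lemma q_mod3_even (hq : q = 2^s) (h : Even s) : ∃ k, q = 3*k+1 := by
  obtain ⟨m, rfl⟩ := h
  obtain ⟨k, hk⟩ := four_pow_mod3 m
  exact ⟨k, by rw [hq, show m+m = 2*m by ring, pow_mul, show (2:ℕ)^2 = 4 from rfl, hk]⟩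

lemma q_mod3_odd (hq : q = 2^s) (h : Odd s) : ∃ k, q = 3*k+2 := by
  obtain ⟨m, rfl⟩ := h
  obtain ⟨k, hk⟩ := four_pow_mod3 m
  refine ⟨2*k, ?_⟩
  rw [hq, pow_succ, pow_mul, show (2:ℕ)^2 = 4 from rfl, hk]
  ring

end
noncomputable section

variable {s q : ℕ}

instance : CharP (Polynomial K) 2 := charP_of_injective_ringHom (Polynomial.C_injective (R := K)) 2

lemma XC1 : (X + 1 : Polynomial K) = X - Polynomial.C 1 := by
  rw [map_one, CharTwo.sub_eq_add]

-- F
lemma F_monic (hq : q = 2^s) (hs : 1 ≤ s) : (X^(q+1) + X + 1 : Polynomial K).Monic := by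
  rw [add_assoc]
  apply monic_X_pow_add
  rw [← Polynomial.C_1, degree_X_add_C]
  exact_mod_cast Nat.lt_of_lt_of_le Nat.one_lt_two (by
    have : 2 ≤ q := by
      rw [hq]
      calc 2 = 2^1 := (pow_one 2).symm
      _ ≤ 2^s := Nat.pow_le_pow_right (by norm_num) hs
    omega)

lemma G_monic (hq : q = 2^s) (hs : 1 ≤ s) : (X^(q+1) + X^q + 1 : Polynomial K).Monic := by
  rw [add_assoc]
  apply monic_X_pow_add
  rw [← Polynomial.C_1, degree_X_pow_add_C (by rw [hq]; positivity)]
  exact_mod_cast Nat.lt_succ_self q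

lemma E_monic : (X^2 + X + 1 : Polynomial K).Monic := by
  rw [add_assoc]
  apply monic_X_pow_add
  rw [← Polynomial.C_1, degree_X_add_C]
  exact_mod_cast Nat.one_lt_two

lemma qcastK (hq : q = 2^s) (hs : 1 ≤ s) : ((q : ℕ) : K) = 0 := by
  rw [hq]
  push_cast
  rw [h2, zero_pow (by omega)]

lemma F_natDegree (hq : q = 2^s) (hs : 1 ≤ s) :
    (X^(q+1) + X + 1 : Polynomial K).natDegree = q + 1 := by
  rw [add_assoc]
  have h1 : (X + 1 : Polynomial K).natDegree < (X^(q+1) : Polynomial K).natDegree := by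
    rw [natDegree_X_pow, ← Polynomial.C_1, natDegree_X_add_C]
    have hq0 : q ≠ 0 := by rw [hq]; positivity
    omega
  rw [natDegree_add_eq_left_of_natDegree_lt h1, natDegree_X_pow]

lemma G_natDegree (hq : q = 2^s) (hs : 1 ≤ s) :
    (X^(q+1) + X^q + 1 : Polynomial K).natDegree = q + 1 := by
  rw [add_assoc]
  have h1 : (X^q + 1 : Polynomial K).natDegree < (X^(q+1) : Polynomial K).natDegree := by
    have h2 : (X^q + 1 : Polynomial K).natDegree ≤ q := by
      apply Polynomial.natDegree_add_le_of_degree_le (by simp) (by simp)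
    rw [natDegree_X_pow]
    omega
  rw [natDegree_add_eq_left_of_natDegree_lt h1, natDegree_X_pow]

lemma F_sep (hq : q = 2^s) (hs : 1 ≤ s) :
    (X^(q+1) + X + 1 : Polynomial K).Separable := by
  rw [add_assoc]
  have hder : derivative (X^(q+1) + (X + 1) : Polynomial K) = (X+1)^q := by
    have hXq : (X + 1 : Polynomial K)^q = X^q + 1 := by
      rw [hq]
      have := add_pow_char_pow (R := Polynomial K) X 1 2 s
      simpa using this
    rw [hXq]
    simp only [derivative_add, derivative_X_pow, derivative_X, derivative_one]
    push_cast
    rw [qcastK hq hs]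
    simp
  rw [separable_def, hder]
  apply IsCoprime.symm
  apply IsCoprime.pow_left
  rw [XC1]
  rw [(irreducible_X_sub_C (1:K)).coprime_iff_not_dvd, dvd_iff_isRoot]
  intro h
  simp only [IsRoot, eval_add, eval_pow, eval_X, eval_one, eval_sub, eval_C, one_pow] at h
  norm_num at h

lemma G_sep (hq : q = 2^s) (hs : 1 ≤ s) :
    (X^(q+1) + X^q + 1 : Polynomial K).Separable := by
  rw [add_assoc]
  have hder : derivative (X^(q+1) + (X^q + 1) : Polynomial K) = X^q := by
    simp only [derivative_add, derivative_X_pow, derivative_one]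
    push_cast
    rw [qcastK hq hs]
    simp
  rw [separable_def, hder]
  apply IsCoprime.symm
  apply IsCoprime.pow_left
  rw [(Polynomial.irreducible_X).coprime_iff_not_dvd, X_dvd_iff]
  have h0 : q ≠ 0 := by rw [hq]; positivity
  intro h
  simp [coeff_add, coeff_X_pow, coeff_one, Ne.symm h0] at h

lemma E_sep : (X^2 + X + 1 : Polynomial K).Separable := by
  rw [add_assoc]
  have hder : derivative (X^2 + (X + 1) : Polynomial K) = 1 := by
    simp only [derivative_add, derivative_X_pow, derivative_X, derivative_one]
    norm_num
    exact CharTwo.two_eq_zero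
  rw [separable_def, hder]
  exact isCoprime_one_right


lemma E_natDegree : (X^2 + X + 1 : Polynomial K).natDegree = 2 := by
  rw [add_assoc]
  have h1 : (X + 1 : Polynomial K).natDegree < (X^2 : Polynomial K).natDegree := by
    rw [natDegree_X_pow, ← Polynomial.C_1, natDegree_X_add_C]
    omega
  rw [natDegree_add_eq_left_of_natDegree_lt h1, natDegree_X_pow]

lemma F_mem (hq : q = 2^s) (hs : 1 ≤ s) {α : K} :
    α ∈ (X^(q+1) + X + 1 : Polynomial K).roots ↔ α^(q+1) + α + 1 = 0 := by
  rw [mem_roots (F_monic hq hs).ne_zero]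
  simp only [IsRoot, eval_add, eval_pow, eval_X, eval_one]

lemma G_mem (hq : q = 2^s) (hs : 1 ≤ s) {α : K} :
    α ∈ (X^(q+1) + X^q + 1 : Polynomial K).roots ↔ α^(q+1) + α^q + 1 = 0 := by
  rw [mem_roots (G_monic hq hs).ne_zero]
  simp only [IsRoot, eval_add, eval_pow, eval_X, eval_one]

lemma E_mem {α : K} :
    α ∈ (X^2 + X + 1 : Polynomial K).roots ↔ α^2 + α + 1 = 0 := by
  rw [mem_roots E_monic.ne_zero]
  simp only [IsRoot, eval_add, eval_pow, eval_X, eval_one]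

lemma eq_of_monic_of_roots_eq {p r : Polynomial K} (hp : p.Monic) (hr : r.Monic)
    (h : p.roots = r.roots) : p = r := by
  have h1 := (IsAlgClosed.splits p).eq_prod_roots_of_monic hp
  have h2' := (IsAlgClosed.splits r).eq_prod_roots_of_monic hr
  rw [h1, h2', h]

lemma card_roots_eq (p : Polynomial K) : p.roots.card = p.natDegree :=
  splits_iff_card_roots.mp (IsAlgClosed.splits p)

end
end Stmt17Aux
open Stmt17Aux

theorem stmt_17 (s : ℕ) (hs : 1 ≤ s) (q : ℕ) (hq : q = 2 ^ s) :
    (Odd s →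
      EuclideanDomain.gcd (X ^ (q ^ 2 + q + 1) - 1)
          ((X + 1) ^ (q ^ 2 + q + 1) - 1 : Polynomial (ZMod 2)) =
        (X ^ (q + 1) + X + 1) * (X ^ (q + 1) + X ^ q + 1)) ∧
    (Even s →
      EuclideanDomain.gcd (X ^ (q ^ 2 + q + 1) - 1)
          ((X + 1) ^ (q ^ 2 + q + 1) - 1 : Polynomial (ZMod 2)) =
        (X ^ (q + 1) + X + 1) * (X ^ (q + 1) + X ^ q + 1) / (X ^ 2 + X + 1)) ∧
    (Set.ncard {α : AlgebraicClosure (ZMod 2) |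
        α ^ (q ^ 2 + q + 1) = 1 ∧ (α + 1) ^ (q ^ 2 + q + 1) = 1} : ℤ) =
      2 * q + 1 - (-1) ^ s := by
  classical
  have hq0 : q ≠ 0 := by rw [hq]; positivity
  have hq2 : 2 ≤ q := by
    rw [hq]
    calc 2 = 2^1 := (pow_one 2).symm
    _ ≤ 2^s := Nat.pow_le_pow_right (by norm_num) hs
  have hqe : 2 ∣ q := by rw [hq]; exact dvd_pow_self 2 (by omega)
  have hN0 : q^2+q+1 ≠ 0 := by positivity
  set T : Polynomial (ZMod 2) := X ^ (q^2+q+1) - 1 with hT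
  set U : Polynomial (ZMod 2) := (X + 1) ^ (q^2+q+1) - 1 with hU
  set d := EuclideanDomain.gcd T U with hd
  set ι := algebraMap (ZMod 2) K with hι
  have hιinj : Function.Injective ι := ι.injective
  have hTm : T.map ι = X ^ (q^2+q+1) - 1 := by
    rw [hT]
    simp [Polynomial.map_sub, Polynomial.map_pow, Polynomial.map_one, Polynomial.map_X]
  have hUm : U.map ι = (X + 1) ^ (q^2+q+1) - 1 := by
    rw [hU]
    simp [Polynomial.map_sub, Polynomial.map_pow, Polynomial.map_add,
      Polynomial.map_one, Polynomial.map_X]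
  have hTmonic : T.Monic := by
    have := monic_X_pow_sub_C (1 : ZMod 2) hN0
    rwa [map_one] at this
  have hTne : T ≠ 0 := hTmonic.ne_zero
  have hdT : d ∣ T := EuclideanDomain.gcd_dvd_left T U
  have hdU : d ∣ U := EuclideanDomain.gcd_dvd_right T U
  have hdne : d ≠ 0 := by
    intro h
    exact hTne (EuclideanDomain.gcd_eq_zero_iff.mp (hd ▸ h)).1
  have hdmonic : d.Monic := by
    have hl := Polynomial.leadingCoeff_ne_zero.mpr hdne
    have h01 : ∀ a : ZMod 2, a ≠ 0 → a = 1 := by decide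
    exact h01 _ hl
  have hNcast : ((q^2+q+1 : ℕ) : ZMod 2) = 1 := by
    obtain ⟨t, ht⟩ := hqe
    rw [show q^2+q+1 = 2*(2*t*t + t) + 1 by rw [ht]; ring]
    push_cast
    rw [show ((2:ZMod 2)) = 0 by decide]
    ring
  have hTsep : T.Separable := by
    have := separable_X_pow_sub_C_unit (n := q^2+q+1) (1 : (ZMod 2)ˣ)
      (by rw [hNcast]; exact isUnit_one)
    rwa [Units.val_one, map_one] at this
  have hdsep : d.Separable := hTsep.of_dvd hdT
  set D := d.map ι with hD
  have hDmonic : D.Monic := hdmonic.map ι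
  have hDsep : D.Separable := hdsep.map
  have hDnodup : D.roots.Nodup := nodup_roots hDsep
  have hDne : D ≠ 0 := map_ne_zero hdne
  have hDmem : ∀ α : K, α ∈ D.roots ↔
      (α^(q^2+q+1) = 1 ∧ (α+1)^(q^2+q+1) = 1) := by
    intro α
    rw [mem_roots hDne]
    constructor
    · intro hr
      constructor
      · have h1 : (T.map ι).eval α = 0 :=
          eval_eq_zero_of_dvd_of_eval_eq_zero (Polynomial.map_dvd ι hdT) hr
        rw [hTm, eval_sub, eval_pow, eval_X, eval_one, sub_eq_zero] at h1
        exact h1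
      · have h1 : (U.map ι).eval α = 0 :=
          eval_eq_zero_of_dvd_of_eval_eq_zero (Polynomial.map_dvd ι hdU) hr
        rw [hUm, eval_sub, eval_pow, eval_add, eval_X, eval_one, sub_eq_zero] at h1
        exact h1
    · rintro ⟨h1, h2'⟩
      have hbez := EuclideanDomain.gcd_eq_gcd_ab T U
      have hDeq : D = T.map ι * (EuclideanDomain.gcdA T U).map ι
          + U.map ι * (EuclideanDomain.gcdB T U).map ι := by
        rw [hD, ← Polynomial.map_mul, ← Polynomial.map_mul, ← Polynomial.map_add, hd, hbez]
      rw [IsRoot, hDeq, eval_add, eval_mul, eval_mul, hTm, hUm,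
        eval_sub, eval_pow, eval_X, eval_one, eval_sub, eval_pow, eval_add,
        eval_X, eval_one, h1, h2']
      ring
  have hSolve : ∀ α : K, (α^(q^2+q+1) = 1 ∧ (α+1)^(q^2+q+1) = 1) ↔
      (α^(q+1)+α+1 = 0 ∨ α^(q+1)+α^q+1 = 0) := by
    intro α
    constructor
    · rintro ⟨h1, h2'⟩
      exact mul_eq_zero.mp ((LC hq h1).mp h2')
    · intro h
      rcases h with h | h
      · have hN1 := LA hq h
        exact ⟨hN1, (LC hq hN1).mpr (mul_eq_zero.mpr (Or.inl h))⟩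
      · have hN1 := LB hq h
        exact ⟨hN1, (LC hq hN1).mpr (mul_eq_zero.mpr (Or.inr h))⟩
  set FF : Polynomial K := X^(q+1) + X + 1 with hFF
  set GG : Polynomial K := X^(q+1) + X^q + 1 with hGG
  set EE : Polynomial K := X^2 + X + 1 with hEE
  have hFnodup : FF.roots.Nodup := nodup_roots (F_sep hq hs)
  have hGnodup : GG.roots.Nodup := nodup_roots (G_sep hq hs)
  have hEnodup : EE.roots.Nodup := nodup_roots E_sep
  have hDmem' : ∀ α : K, α ∈ D.roots ↔ (α ∈ FF.roots ∨ α ∈ GG.roots) := by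
    intro α
    rw [hDmem α, hSolve α, F_mem hq hs, G_mem hq hs]
  have hfmap : (X ^ (q + 1) + X + 1 : Polynomial (ZMod 2)).map ι = FF := by
    rw [hFF]
    simp [Polynomial.map_add, Polynomial.map_pow, Polynomial.map_one, Polynomial.map_X]
  have hgmap : (X ^ (q + 1) + X ^ q + 1 : Polynomial (ZMod 2)).map ι = GG := by
    rw [hGG]
    simp [Polynomial.map_add, Polynomial.map_pow, Polynomial.map_one, Polynomial.map_X]
  have hemap : (X ^ 2 + X + 1 : Polynomial (ZMod 2)).map ι = EE := by
    rw [hEE]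
    simp [Polynomial.map_add, Polynomial.map_pow, Polynomial.map_one, Polynomial.map_X]
  have hFcard : FF.roots.card = q + 1 := by rw [card_roots_eq, F_natDegree hq hs]
  have hGcard : GG.roots.card = q + 1 := by rw [card_roots_eq, G_natDegree hq hs]
  have hEcard : EE.roots.card = 2 := by rw [card_roots_eq, E_natDegree]
  refine ⟨?_, ?_, ?_⟩
  · -- odd case
    intro hodd
    have hdisj : ∀ α : K, α ∈ FF.roots → α ∈ GG.roots → False := by
      intro α h1 h2'
      exact LF (q_mod3_odd hq hodd)
        (LD ((F_mem hq hs).mp h1) ((G_mem hq hs).mp h2')) ((F_mem hq hs).mp h1)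
    have hMult : D.roots = FF.roots + GG.roots := by
      rw [Multiset.Nodup.ext hDnodup
        (Multiset.nodup_add.mpr ⟨hFnodup, hGnodup,
          Multiset.disjoint_left.mpr (fun {a} ha hb => hdisj a ha hb)⟩)]
      intro α
      rw [Multiset.mem_add]
      exact hDmem' α
    have hProd : D = FF * GG := by
      apply eq_of_monic_of_roots_eq hDmonic ((F_monic hq hs).mul (G_monic hq hs))
      rw [roots_mul (mul_ne_zero (F_monic hq hs).ne_zero (G_monic hq hs).ne_zero)]
      exact hMult
    apply Polynomial.map_injective ι hιinj
    rw [Polynomial.map_mul, hfmap, hgmap, ← hProd]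
  · -- even case
    intro heven
    have hinter : ∀ α : K, α ∈ FF.roots → α ∈ GG.roots → α ∈ EE.roots := by
      intro α h1 h2'
      exact E_mem.mpr (LD ((F_mem hq hs).mp h1) ((G_mem hq hs).mp h2'))
    have hboth : ∀ α : K, α ∈ EE.roots → α ∈ FF.roots ∧ α ∈ GG.roots := by
      intro α h1
      obtain ⟨ha, hb⟩ := LE (q_mod3_even hq heven) (E_mem.mp h1)
      exact ⟨(F_mem hq hs).mpr ha, (G_mem hq hs).mpr hb⟩
    have hMult : FF.roots + GG.roots = D.roots + EE.roots := by
      apply Multiset.ext.mpr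
      intro α
      rw [Multiset.count_add, Multiset.count_add]
      by_cases h1 : α ∈ FF.roots <;> by_cases h2' : α ∈ GG.roots
      · rw [Multiset.count_eq_one_of_mem hFnodup h1,
          Multiset.count_eq_one_of_mem hGnodup h2',
          Multiset.count_eq_one_of_mem hDnodup ((hDmem' α).mpr (Or.inl h1)),
          Multiset.count_eq_one_of_mem hEnodup (hinter α h1 h2')]
      · have he : α ∉ EE.roots := fun he => h2' (hboth α he).2
        rw [Multiset.count_eq_one_of_mem hFnodup h1,
          Multiset.count_eq_zero_of_notMem h2',
          Multiset.count_eq_one_of_mem hDnodup ((hDmem' α).mpr (Or.inl h1)),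
          Multiset.count_eq_zero_of_notMem he]
      · have he : α ∉ EE.roots := fun he => h1 (hboth α he).1
        rw [Multiset.count_eq_zero_of_notMem h1,
          Multiset.count_eq_one_of_mem hGnodup h2',
          Multiset.count_eq_one_of_mem hDnodup ((hDmem' α).mpr (Or.inr h2')),
          Multiset.count_eq_zero_of_notMem he]
      · have hd0 : α ∉ D.roots := by
          intro hdm
          rcases (hDmem' α).mp hdm with h | h
          exacts [h1 h, h2' h]
        have he : α ∉ EE.roots := fun he => h1 (hboth α he).1
        rw [Multiset.count_eq_zero_of_notMem h1,
          Multiset.count_eq_zero_of_notMem h2',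
          Multiset.count_eq_zero_of_notMem hd0,
          Multiset.count_eq_zero_of_notMem he]
    have hProd : FF * GG = D * EE := by
      apply eq_of_monic_of_roots_eq ((F_monic hq hs).mul (G_monic hq hs))
        (hDmonic.mul E_monic)
      rw [roots_mul (mul_ne_zero (F_monic hq hs).ne_zero (G_monic hq hs).ne_zero),
        roots_mul (mul_ne_zero hDne E_monic.ne_zero)]
      exact hMult
    have hpull : (X ^ (q + 1) + X + 1) * (X ^ (q + 1) + X ^ q + 1)
        = (X ^ 2 + X + 1 : Polynomial (ZMod 2)) * d := by
      apply Polynomial.map_injective ι hιinj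
      rw [Polynomial.map_mul, Polynomial.map_mul, hfmap, hgmap, hemap, hProd]
      ring
    have he0 : (X ^ 2 + X + 1 : Polynomial (ZMod 2)) ≠ 0 := by
      intro h
      have h1 := congrArg (eval 1) h
      simp only [eval_add, eval_pow, eval_X, eval_one, eval_zero, one_pow] at h1
      exact (by decide : (1:ZMod 2) + 1 + 1 ≠ 0) h1
    rw [hpull]
    exact (mul_div_cancel_left₀ d he0).symm
  · -- counting
    have hSset : {α : K |
        α ^ (q ^ 2 + q + 1) = 1 ∧ (α + 1) ^ (q ^ 2 + q + 1) = 1}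
        = ↑(FF.roots.toFinset ∪ GG.roots.toFinset) := by
      ext α
      simp only [Set.mem_setOf_eq, Finset.coe_union, Set.mem_union,
        Finset.mem_coe, Multiset.mem_toFinset]
      rw [hSolve α, F_mem hq hs, G_mem hq hs]
    have hFtc : FF.roots.toFinset.card = q + 1 := by
      rw [Multiset.toFinset_card_of_nodup hFnodup, hFcard]
    have hGtc : GG.roots.toFinset.card = q + 1 := by
      rw [Multiset.toFinset_card_of_nodup hGnodup, hGcard]
    have hcardsum := Finset.card_union_add_card_inter FF.roots.toFinset GG.roots.toFinset
    rw [hFtc, hGtc] at hcardsum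
    have hncard : ({α : K |
        α ^ (q ^ 2 + q + 1) = 1 ∧ (α + 1) ^ (q ^ 2 + q + 1) = 1} : Set K).ncard
        = (FF.roots.toFinset ∪ GG.roots.toFinset).card := by
      rw [hSset, Set.ncard_coe_finset]
    rcases Nat.even_or_odd s with heven | hodd
    · have hintereq : FF.roots.toFinset ∩ GG.roots.toFinset = EE.roots.toFinset := by
        ext α
        simp only [Finset.mem_inter, Multiset.mem_toFinset]
        constructor
        · rintro ⟨h1, h2'⟩
          exact E_mem.mpr (LD ((F_mem hq hs).mp h1) ((G_mem hq hs).mp h2'))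
        · intro h1
          obtain ⟨ha, hb⟩ := LE (q_mod3_even hq heven) (E_mem.mp h1)
          exact ⟨(F_mem hq hs).mpr ha, (G_mem hq hs).mpr hb⟩
      have hEtc : EE.roots.toFinset.card = 2 := by
        rw [Multiset.toFinset_card_of_nodup hEnodup, hEcard]
      rw [hintereq, hEtc] at hcardsum
      have hufin : (FF.roots.toFinset ∪ GG.roots.toFinset).card = 2*q := by omega
      rw [hncard, hufin, Even.neg_one_pow heven]
      push_cast
      ring
    · have hintereq : FF.roots.toFinset ∩ GG.roots.toFinset = ∅ := by
        ext α
        simp only [Finset.mem_inter, Multiset.mem_toFinset, Finset.notMem_empty,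
          iff_false, not_and]
        intro h1 h2'
        exact LF (q_mod3_odd hq hodd)
          (LD ((F_mem hq hs).mp h1) ((G_mem hq hs).mp h2')) ((F_mem hq hs).mp h1)
      rw [hintereq, Finset.card_empty] at hcardsum
      have hufin : (FF.roots.toFinset ∪ GG.roots.toFinset).card = 2*q + 2 := by omega
      rw [hncard, hufin, Odd.neg_one_pow hodd]
      push_cast
      ring
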